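/- Consider the linear uncertain system on ℝⁿ: x₁⁺ = (1−2r)x₁ + d x₂, x_i⁺ = d x_{i−1} + (1−2r)x_i + d x_{i+1} for 2 ≤ i ≤ n−1, x_n⁺ = d x_{n−1} + (1−2r)x_n, where d ∈ [−r, r] at each time step and 0 < r ≤ 1/2. Then the origin is robustly globally exponentially stable: there exist M, σ > 0 such that every solution (with arbitrary disturbance sequence d_t ∈ [−r,r]) satisfies |x(t)| ≤ M exp(−σ t)|x(0)| for all t ∈ ℕ. -/

import Mathlib

theorem stmt_19 {n : ℕ} (hn : 2 ≤ n) (r : ℝ) (hr : 0 < r) (hr2 : r ≤ 1 / 2) :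
    ∃ M σ : ℝ, 0 < M ∧ 0 < σ ∧
      ∀ (x : ℕ → EuclideanSpace ℝ (Fin n)) (d : ℕ → ℝ),
        (∀ t, d t ∈ Set.Icc (-r) r) →
        (∀ (t : ℕ) (i : Fin n), x (t + 1) i =
          (1 - 2 * r) * x t i +
            d t * ((if h : 0 < (i : ℕ) then x t ⟨(i : ℕ) - 1, by omega⟩ else 0) +
              (if h : (i : ℕ) + 1 < n then x t ⟨(i : ℕ) + 1, h⟩ else 0))) →
        ∀ t : ℕ, ‖x t‖ ≤ M * Real.exp (-σ * t) * ‖x 0‖ := by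
  have hπ := Real.pi_pos
  set θ : ℝ := Real.pi / (n + 1) with hθdef
  have hn1 : (0:ℝ) < n + 1 := by positivity
  have hθpos : 0 < θ := by positivity
  have hθπ : (n + 1 : ℝ) * θ = Real.pi := by
    rw [hθdef]; field_simp
  have hθlt : θ < Real.pi / 2 := by
    rw [hθdef, div_lt_div_iff₀ hn1 (by norm_num)]
    have : (3:ℝ) ≤ (n:ℝ) + 1 := by
      have : (2:ℝ) ≤ (n:ℝ) := by exact_mod_cast hn
      linarith
    nlinarith
  have hcospos : 0 < Real.cos θ :=
    Real.cos_pos_of_mem_Ioo ⟨by linarith, hθlt⟩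
  have hsinpos : 0 < Real.sin θ :=
    Real.sin_pos_of_pos_of_lt_pi hθpos (by linarith)
  have hcoslt : Real.cos θ < 1 := by
    nlinarith [Real.sin_sq_add_cos_sq θ]
  -- weights
  have hne : Nonempty (Fin n) := ⟨⟨0, by omega⟩⟩
  set w : Fin n → ℝ := fun i => Real.sin (((i : ℕ) + 1) * θ) with hwdef
  have hwpos : ∀ i : Fin n, 0 < w i := by
    intro i
    apply Real.sin_pos_of_pos_of_lt_pi
    · positivity
    · rw [← hθπ]
      have : ((i : ℕ) : ℝ) + 1 < (n : ℝ) + 1 := by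
        have := i.2; exact_mod_cast Nat.succ_lt_succ this
      nlinarith
  have hwle1 : ∀ i : Fin n, w i ≤ 1 := fun i => Real.sin_le_one _
  set s : ℝ := Finset.univ.inf' Finset.univ_nonempty w with hsdef
  have hspos : 0 < s := by
    rw [hsdef]
    apply Finset.lt_inf'_iff _ |>.mpr
    intro i _
    exact hwpos i
  have hsle : ∀ i : Fin n, s ≤ w i := fun i =>
    Finset.inf'_le _ (Finset.mem_univ i)
  set lam : ℝ := 1 - 2 * r * (1 - Real.cos θ) with hlamdef
  have hlam0 : 0 < lam := by
    have h1 : 1 - Real.cos θ < 1 := by linarith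
    nlinarith
  have hlam1 : lam < 1 := by nlinarith
  refine ⟨Real.sqrt n / s, -Real.log lam, by positivity, ?_, ?_⟩
  · exact neg_pos.mpr (Real.log_neg hlam0 hlam1)
  intro x d hd hrec t
  set B : ℝ := ‖x 0‖ / s with hBdef
  have hB0 : 0 ≤ B := by positivity
  have key : ∀ t : ℕ, ∀ i : Fin n, |x t i| ≤ lam ^ t * B * w i := by
    intro t
    induction t with
    | zero =>
      intro i
      have h1 : |x 0 i| ≤ ‖x 0‖ := by
        have := EuclideanSpace.norm_eq (x 0)
        have h2 : |x 0 i| = Real.sqrt (|x 0 i| ^ 2) := by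
          rw [Real.sqrt_sq_eq_abs, abs_abs]
        rw [this, h2]
        apply Real.sqrt_le_sqrt
        have : ‖x 0 i‖ ^ 2 = |x 0 i| ^ 2 := by rw [Real.norm_eq_abs]
        rw [← this]
        exact Finset.single_le_sum (f := fun j => ‖x 0 j‖ ^ 2)
          (fun j _ => by positivity) (Finset.mem_univ i)
      have h3 : ‖x 0‖ ≤ B * w i := by
        rw [hBdef, div_mul_eq_mul_div, le_div_iff₀ hspos]
        have := hsle i
        nlinarith [norm_nonneg (x 0)]
      simpa using h1.trans h3
    | succ t ih =>
      intro i
      have hdt := hd t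
      have hdabs : |d t| ≤ r := abs_le.mpr ⟨hdt.1, hdt.2⟩
      -- bound the previous-neighbor term
      have hprev : |(if h : 0 < (i : ℕ) then x t ⟨(i : ℕ) - 1, by omega⟩ else 0)| ≤
          lam ^ t * B * Real.sin ((i : ℕ) * θ) := by
        by_cases h : 0 < (i : ℕ)
        · rw [dif_pos h]
          have := ih ⟨(i : ℕ) - 1, by omega⟩
          have hcast : ((((⟨(i : ℕ) - 1, by omega⟩ : Fin n) : ℕ) : ℝ) + 1) = ((i : ℕ) : ℝ) := by
            simp only []
            have : ((i : ℕ) - 1 : ℕ) + 1 = (i : ℕ) := by omega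
            exact_mod_cast congrArg (Nat.cast : ℕ → ℝ) this
          rw [hwdef] at this
          simp only at this
          rw [hcast] at this
          exact this
        · rw [dif_neg h]
          have : (i : ℕ) = 0 := by omega
          rw [this]
          simp
      have hnext : |(if h : (i : ℕ) + 1 < n then x t ⟨(i : ℕ) + 1, h⟩ else 0)| ≤
          lam ^ t * B * Real.sin (((i : ℕ) + 2) * θ) := by
        by_cases h : (i : ℕ) + 1 < n
        · rw [dif_pos h]
          have := ih ⟨(i : ℕ) + 1, h⟩
          have hcast : ((((⟨(i : ℕ) + 1, h⟩ : Fin n) : ℕ) : ℝ) + 1) = ((i : ℕ) : ℝ) + 2 := by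
            push_cast; ring
          rw [hwdef] at this
          simp only at this
          rw [hcast] at this
          exact this
        · rw [dif_neg h]
          have hi : (i : ℕ) + 1 = n := by have := i.2; omega
          have : (((i : ℕ) : ℝ) + 2) * θ = Real.pi := by
            rw [← hθπ]
            have : ((i : ℕ) : ℝ) = (n : ℝ) - 1 := by
              have : ((i : ℕ) + 1 : ℕ) = n := hi
              have := congrArg (Nat.cast : ℕ → ℝ) this
              push_cast at this
              linarith
            rw [this]; ring
          rw [this, Real.sin_pi]
          simp
      -- trig identity
      have htrig : Real.sin ((i : ℕ) * θ) + Real.sin (((i : ℕ) + 2) * θ) =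
          2 * Real.cos θ * w i := by
        have h1 : ((i : ℕ) : ℝ) * θ = (((i : ℕ) : ℝ) + 1) * θ - θ := by ring
        have h2 : (((i : ℕ) : ℝ) + 2) * θ = (((i : ℕ) : ℝ) + 1) * θ + θ := by ring
        rw [h1, h2, Real.sin_sub, Real.sin_add, hwdef]
        ring
      have habs : |x (t + 1) i| ≤ (1 - 2 * r) * |x t i| +
          r * (|(if h : 0 < (i : ℕ) then x t ⟨(i : ℕ) - 1, by omega⟩ else 0)| +
               |(if h : (i : ℕ) + 1 < n then x t ⟨(i : ℕ) + 1, h⟩ else 0)|) := by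
        rw [hrec t i]
        calc |(1 - 2 * r) * x t i + d t * _| ≤
            |(1 - 2 * r) * x t i| + |d t * _| := abs_add_le _ _
          _ ≤ _ := by
            rw [abs_mul, abs_mul]
            gcongr
            · rw [abs_of_nonneg (by linarith)]
            · exact abs_add_le _ _
      refine habs.trans ?_
      have h1 : (1 - 2 * r) * |x t i| ≤ (1 - 2 * r) * (lam ^ t * B * w i) :=
        mul_le_mul_of_nonneg_left (ih i) (by linarith)
      have h2 : |(if h : 0 < (i : ℕ) then x t ⟨(i : ℕ) - 1, by omega⟩ else 0)| +
          |(if h : (i : ℕ) + 1 < n then x t ⟨(i : ℕ) + 1, h⟩ else 0)| ≤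
          lam ^ t * B * Real.sin ((i : ℕ) * θ) +
          lam ^ t * B * Real.sin (((i : ℕ) + 2) * θ) := add_le_add hprev hnext
      have h2' := mul_le_mul_of_nonneg_left h2 hr.le
      have h4 : (1 - 2 * r) * (lam ^ t * B * w i) +
          r * (lam ^ t * B * Real.sin ((i : ℕ) * θ) +
               lam ^ t * B * Real.sin (((i : ℕ) + 2) * θ)) = lam ^ (t + 1) * B * w i := by
        rw [pow_succ]
        linear_combination (lam ^ t * B * r) * htrig - (lam ^ t * B * w i) * hlamdef
      linarith [h1, h2', h4]
  -- conclude
  have hnorm : ‖x t‖ ≤ Real.sqrt n * (lam ^ t * B) := by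
    rw [EuclideanSpace.norm_eq]
    have hb : ∀ i : Fin n, ‖x t i‖ ^ 2 ≤ (lam ^ t * B) ^ 2 := by
      intro i
      have h1 := key t i
      have hp : (0:ℝ) ≤ lam ^ t * B := by positivity
      have h2 : lam ^ t * B * w i ≤ lam ^ t * B := by
        calc lam ^ t * B * w i ≤ lam ^ t * B * 1 :=
              mul_le_mul_of_nonneg_left (hwle1 i) hp
          _ = lam ^ t * B := mul_one _
      have h3 : |x t i| ≤ lam ^ t * B := h1.trans h2
      rw [Real.norm_eq_abs]
      exact pow_le_pow_left₀ (abs_nonneg _) h3 2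
    calc Real.sqrt (∑ i, ‖x t i‖ ^ 2) ≤
        Real.sqrt (∑ _i : Fin n, (lam ^ t * B) ^ 2) := by
          apply Real.sqrt_le_sqrt
          exact Finset.sum_le_sum fun i _ => hb i
      _ = Real.sqrt n * (lam ^ t * B) := by
          rw [Finset.sum_const, Finset.card_univ, Fintype.card_fin, nsmul_eq_mul,
            Real.sqrt_mul (by positivity), Real.sqrt_sq (by positivity)]
  have hexp : Real.exp (-(-Real.log lam) * t) = lam ^ t := by
    rw [neg_neg, mul_comm, Real.exp_nat_mul, Real.exp_log hlam0]
  calc ‖x t‖ ≤ Real.sqrt n * (lam ^ t * B) := hnorm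
    _ = Real.sqrt n / s * Real.exp (-(-Real.log lam) * t) * ‖x 0‖ := by
        rw [hexp, hBdef]; ring
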